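/- Let m be a minor containing two minors f₁ and f₂ of a generic matrix. If R(f₂) ⊆ R(f₁) and C(f₂) ⊄ C(f₁), or C(f₂) ⊆ C(f₁) and R(f₂) ⊄ R(f₁), then the removed sets rterm(m,f₁) and rterm(m,f₂) are disjoint. -/
import Mathlib

lemma sum_single_apply_ne_zero_of_mem {ι α : Type*} [Fintype ι] [DecidableEq α]
    (f : ι → α) (x : ι) : (∑ y, Finsupp.single (f y) (1 : ℕ)) (f x) ≠ 0 := by
  rw [Finsupp.finset_sum_apply]
  intro h
  have := (Finset.sum_eq_zero_iff.mp h) x (Finset.mem_univ x)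
  simp [Finsupp.single_apply] at this

lemma exists_of_sum_single_apply_ne_zero {ι α : Type*} [Fintype ι] [DecidableEq α]
    (f : ι → α) (p : α) (h : (∑ y, Finsupp.single (f y) (1 : ℕ)) p ≠ 0) :
    ∃ x, f x = p := by
  rw [Finsupp.finset_sum_apply] at h
  obtain ⟨x, -, hx⟩ := Finset.exists_ne_zero_of_sum_ne_zero h
  refine ⟨x, ?_⟩
  by_contra hne
  simp [Finsupp.single_apply, hne] at hx

/-- Let `m` be the minor with rows `a`, columns `b`, containing two minors
`f₁` (positions `u₁, v₁`, complementary positions `uc₁, vc₁`) and `f₂` (positions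
`u₂, v₂`, complementary positions `uc₂, vc₂`).  If `R(f₂) ⊆ R(f₁)` and
`C(f₂) ⊄ C(f₁)`, or `C(f₂) ⊆ C(f₁)` and `R(f₂) ⊄ R(f₁)`, then the removed sets
`rterm(m,f₁)` and `rterm(m,f₂)` (exponents of products of a term of `fᵢ` with a term
of its complement in `m`) are disjoint. -/
theorem stmt_6 (m n r k₁ k₂ : ℕ)
    (a : Fin r → Fin m) (b : Fin r → Fin n) (ha : StrictMono a) (hb : StrictMono b)
    (u₁ v₁ : Fin k₁ → Fin r) (uc₁ vc₁ : Fin (r - k₁) → Fin r)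
    (hu₁ : StrictMono u₁) (hv₁ : StrictMono v₁) (huc₁ : StrictMono uc₁) (hvc₁ : StrictMono vc₁)
    (hucompl₁ : Set.range uc₁ = (Set.range u₁)ᶜ) (hvcompl₁ : Set.range vc₁ = (Set.range v₁)ᶜ)
    (u₂ v₂ : Fin k₂ → Fin r) (uc₂ vc₂ : Fin (r - k₂) → Fin r)
    (hu₂ : StrictMono u₂) (hv₂ : StrictMono v₂) (huc₂ : StrictMono uc₂) (hvc₂ : StrictMono vc₂)
    (hucompl₂ : Set.range uc₂ = (Set.range u₂)ᶜ) (hvcompl₂ : Set.range vc₂ = (Set.range v₂)ᶜ)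
    (hcond :
      (Set.range (fun x => a (u₂ x)) ⊆ Set.range (fun x => a (u₁ x)) ∧
        ¬ Set.range (fun x => b (v₂ x)) ⊆ Set.range (fun x => b (v₁ x))) ∨
      (Set.range (fun x => b (v₂ x)) ⊆ Set.range (fun x => b (v₁ x)) ∧
        ¬ Set.range (fun x => a (u₂ x)) ⊆ Set.range (fun x => a (u₁ x)))) :
    ∀ E : (Fin m × Fin n) →₀ ℕ,
      (∃ (σ : Equiv.Perm (Fin k₁)) (τ : Equiv.Perm (Fin (r - k₁))),
        E = (∑ x : Fin k₁, Finsupp.single (a (u₁ x), b (v₁ (σ x))) 1) +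
          ∑ x : Fin (r - k₁), Finsupp.single (a (uc₁ x), b (vc₁ (τ x))) 1) →
      ¬ (∃ (σ : Equiv.Perm (Fin k₂)) (τ : Equiv.Perm (Fin (r - k₂))),
        E = (∑ x : Fin k₂, Finsupp.single (a (u₂ x), b (v₂ (σ x))) 1) +
          ∑ x : Fin (r - k₂), Finsupp.single (a (uc₂ x), b (vc₂ (τ x))) 1) := by
  rintro E ⟨σ₁, τ₁, h1⟩ ⟨σ₂, τ₂, h2⟩
  have hainj := ha.injective
  have hbinj := hb.injective
  rcases hcond with ⟨hsub, hns⟩ | ⟨hsub, hns⟩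
  · -- Case A: rows of f₂ inside rows of f₁, some column of f₂ outside
    rw [Set.not_subset] at hns
    obtain ⟨c, ⟨y, hy⟩, hcout⟩ := hns
    have hy' : b (v₂ y) = c := hy
    have hmem := sum_single_apply_ne_zero_of_mem
      (fun z : Fin k₂ => (a (u₂ z), b (v₂ (σ₂ z)))) (σ₂.symm y)
    have hEp : E (a (u₂ (σ₂.symm y)), b (v₂ (σ₂ (σ₂.symm y)))) ≠ 0 := by
      rw [h2, Finsupp.add_apply]
      intro h0
      exact hmem (Nat.eq_zero_of_add_eq_zero_right h0)
    rw [h1, Finsupp.add_apply] at hEp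
    by_cases h : (∑ z : Fin k₁, Finsupp.single (a (u₁ z), b (v₁ (σ₁ z))) (1:ℕ))
        (a (u₂ (σ₂.symm y)), b (v₂ (σ₂ (σ₂.symm y)))) = 0
    · have h' : (∑ z : Fin (r - k₁), Finsupp.single (a (uc₁ z), b (vc₁ (τ₁ z))) (1:ℕ))
          (a (u₂ (σ₂.symm y)), b (v₂ (σ₂ (σ₂.symm y)))) ≠ 0 := by
        intro h0; exact hEp (by rw [h, h0])
      obtain ⟨z, hz⟩ := exists_of_sum_single_apply_ne_zero _ _ h'
      have hrow : a (uc₁ z) = a (u₂ (σ₂.symm y)) := congrArg Prod.fst hz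
      obtain ⟨w, hw⟩ := hsub ⟨σ₂.symm y, rfl⟩
      have hw' : a (u₁ w) = a (u₂ (σ₂.symm y)) := hw
      have huw : uc₁ z = u₁ w := hainj (by rw [hrow, hw'])
      have hnot : uc₁ z ∈ (Set.range u₁)ᶜ := hucompl₁ ▸ Set.mem_range_self z
      exact hnot ⟨w, huw.symm⟩
    · obtain ⟨z, hz⟩ := exists_of_sum_single_apply_ne_zero _ _ h
      have hcol : b (v₁ (σ₁ z)) = b (v₂ (σ₂ (σ₂.symm y))) := congrArg Prod.snd hz
      apply hcout
      refine ⟨σ₁ z, ?_⟩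
      show b (v₁ (σ₁ z)) = c
      rw [hcol, Equiv.apply_symm_apply, hy']
  · -- Case B: columns of f₂ inside columns of f₁, some row of f₂ outside
    rw [Set.not_subset] at hns
    obtain ⟨c, ⟨y, hy⟩, hrout⟩ := hns
    have hy' : a (u₂ y) = c := hy
    have hmem := sum_single_apply_ne_zero_of_mem
      (fun z : Fin k₂ => (a (u₂ z), b (v₂ (σ₂ z)))) y
    have hEp : E (a (u₂ y), b (v₂ (σ₂ y))) ≠ 0 := by
      rw [h2, Finsupp.add_apply]
      intro h0
      exact hmem (Nat.eq_zero_of_add_eq_zero_right h0)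
    rw [h1, Finsupp.add_apply] at hEp
    by_cases h : (∑ z : Fin k₁, Finsupp.single (a (u₁ z), b (v₁ (σ₁ z))) (1:ℕ))
        (a (u₂ y), b (v₂ (σ₂ y))) = 0
    · have h' : (∑ z : Fin (r - k₁), Finsupp.single (a (uc₁ z), b (vc₁ (τ₁ z))) (1:ℕ))
          (a (u₂ y), b (v₂ (σ₂ y))) ≠ 0 := by
        intro h0; exact hEp (by rw [h, h0])
      obtain ⟨z, hz⟩ := exists_of_sum_single_apply_ne_zero _ _ h'
      have hcol : b (vc₁ (τ₁ z)) = b (v₂ (σ₂ y)) := congrArg Prod.snd hz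
      obtain ⟨w, hw⟩ := hsub ⟨σ₂ y, rfl⟩
      have hw' : b (v₁ w) = b (v₂ (σ₂ y)) := hw
      have hvw : vc₁ (τ₁ z) = v₁ w := hbinj (by rw [hcol, hw'])
      have hnot : vc₁ (τ₁ z) ∈ (Set.range v₁)ᶜ := hvcompl₁ ▸ Set.mem_range_self _
      exact hnot ⟨w, hvw.symm⟩
    · obtain ⟨z, hz⟩ := exists_of_sum_single_apply_ne_zero _ _ h
      have hrow : a (u₁ z) = a (u₂ y) := congrArg Prod.fst hz
      exact hrout ⟨z, by show a (u₁ z) = c; rw [hrow, hy']⟩
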